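/- Let Δ(z,y) denote the formula z_0≐y_{00} ∧ y_{01}≐y_{10} ∧ z_1≐y_{11}, and for χ ∈ Fmd3^1 let χz := ∃x(x≐z ∧ χ). Then for all φ, ψ ∈ Fmd3^1: (C2) Ax ⊢d3 (φ∘ψ)z ↔ ∃y(Δ(z,y) ∧ φy_0 ∧ ψy_1); (C1) Ax ⊢d3 [¬(φ∘ψ)]z ↔ ¬∃y(Δ(z,y) ∧ φy_0 ∧ ψy_1); and consequently (C) Ax ⊢d3 [¬(φ∘ψ)]z ↔ ¬[(φ∘ψ)z]. -/

import Mathlib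

/- Core: the logic Ld3 : syntax, proof system, semantics, Gödel numbering. -/

inductive Var : Type
  | x
  | y
  | z
deriving DecidableEq

def Var.toNat : Var → Nat
  | .x => 0
  | .y => 1
  | .z => 2

/-- Formulas of the logic `Ld3`: one atomic formula `P(x,y,z)`, connectives `∨, ¬`
and quantifiers `∃x, ∃y, ∃z`. -/
inductive Fmd3 : Type
  | P : Fmd3
  | or : Fmd3 → Fmd3 → Fmd3
  | not : Fmd3 → Fmd3
  | ex : Var → Fmd3 → Fmd3
deriving DecidableEq

namespace Fmd3

def and (φ ψ : Fmd3) : Fmd3 := .not (.or (.not φ) (.not ψ))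

def imp (φ ψ : Fmd3) : Fmd3 := .or (.not φ) ψ

def iff (φ ψ : Fmd3) : Fmd3 := (φ.imp ψ).and (ψ.imp φ)

def all (v : Var) (φ : Fmd3) : Fmd3 := .not (.ex v (.not φ))

def freeVars : Fmd3 → Finset Var
  | .P => {Var.x, Var.y, Var.z}
  | .or a b => a.freeVars ∪ b.freeVars
  | .not a => a.freeVars
  | .ex v a => a.freeVars.erase v

/-- `Fmd3⁰`: sentences. -/
def IsSentence (φ : Fmd3) : Prop := φ.freeVars = ∅

/-- `Fmd3¹`: formulas whose only free variable is `x`. -/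
def OneFree (φ : Fmd3) : Prop := φ.freeVars ⊆ {Var.x}

/-- `φ` is a propositional tautology: every Boolean valuation that respects
`∨` and `¬` (treating other formulas as propositional atoms) makes `φ` true. -/
def Taut (φ : Fmd3) : Prop :=
  ∀ v : Fmd3 → Bool,
    (∀ a b : Fmd3, v (.or a b) = (v a || v b)) →
    (∀ a : Fmd3, v (.not a) = !(v a)) →
    v φ = true

/-- Satisfaction of an `Fmd3` formula in a model `(M, R)` under evaluation `e`. -/
def Sat (M : Type) (R : M → M → M → Prop) : Fmd3 → (Var → M) → Prop
  | .P, e => R (e .x) (e .y) (e .z)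
  | .or a b, e => Sat M R a e ∨ Sat M R b e
  | .not a, e => ¬ Sat M R a e
  | .ex v a, e => ∃ m : M, Sat M R a (Function.update e v m)

/-- A standard (injective) Gödel numbering of `Fmd3`. -/
def encode : Fmd3 → Nat
  | .P => 0
  | .or a b => 4 * Nat.pair a.encode b.encode + 1
  | .not a => 4 * a.encode + 2
  | .ex v a => 4 * Nat.pair v.toNat a.encode + 3

end Fmd3

/-- The Hilbert-style proof system `⊢d3`, with rules Modus Ponens and Generalization,
and axiom schemes ((1))–((7)). -/
inductive Prf (T : Set Fmd3) : Fmd3 → Prop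
  | hyp {φ : Fmd3} : φ ∈ T → Prf T φ
  | taut {φ : Fmd3} : φ.Taut → Prf T φ
  | ax2 (v : Var) (φ ψ : Fmd3) :
      Prf T ((Fmd3.all v (φ.imp ψ)).imp ((Fmd3.ex v φ).imp (Fmd3.ex v ψ)))
  | ax3 (v : Var) (φ : Fmd3) : Prf T (φ.imp (.ex v φ))
  | ax4 (v : Var) (φ : Fmd3) : Prf T ((Fmd3.ex v (.ex v φ)).imp (.ex v φ))
  | ax5 (v : Var) (φ ψ : Fmd3) :
      Prf T ((Fmd3.ex v (φ.or ψ)).iff ((Fmd3.ex v φ).or (.ex v ψ)))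
  | ax6 (v : Var) (φ : Fmd3) :
      Prf T ((Fmd3.ex v (.not (.ex v φ))).imp (.not (.ex v φ)))
  | ax7 (v w : Var) (φ : Fmd3) :
      Prf T ((Fmd3.ex v (.ex w φ)).imp (.ex w (.ex v φ)))
  | mp {φ ψ : Fmd3} : Prf T (φ.imp ψ) → Prf T φ → Prf T ψ
  | gen {φ : Fmd3} (v : Var) : Prf T φ → Prf T (.all v φ)

/-- Semantic consequence for `Ld3`: every model of `T` satisfies `φ` under every
evaluation. -/
def SemConsD (T : Set Fmd3) (φ : Fmd3) : Prop :=
  ∀ (M : Type) (_ : Nonempty M) (R : M → M → M → Prop),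
    (∀ ψ ∈ T, ∀ e : Var → M, ψ.Sat M R e) → ∀ e : Var → M, φ.Sat M R e

/-- Validity for `Ld3`. -/
def ValidD (φ : Fmd3) : Prop := SemConsD ∅ φ

/-- A set of `Fmd3`-formulas is recursive (decidable w.r.t. the standard
Gödel numbering). -/
def RecSetD (S : Set Fmd3) : Prop :=
  ∃ g : Nat → Bool, Computable g ∧ ∀ φ : Fmd3, φ ∈ S ↔ g φ.encode = true

/- Parameter formulas δxy, δxz, p0, p1; simulated equality and substitution;
pairing axioms Ax and SAx; the relation-algebra and cylindric-algebra reducts. -/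

structure Params where
  dxy : Fmd3
  dxz : Fmd3
  p0 : Fmd3
  p1 : Fmd3

/-- The required free-variable sets of the parameter formulas. -/
def GoodParams (P : Params) : Prop :=
  P.dxy.freeVars = {Var.x, Var.y} ∧ P.dxz.freeVars = {Var.x, Var.z} ∧
    P.p0.freeVars = {Var.x, Var.y} ∧ P.p1.freeVars = {Var.x, Var.y}

/-- A provably true formula. -/
def trueF (P : Params) : Fmd3 := P.dxy.or P.dxy.not

/-- Simulated equality `u ≐ v` between variables. -/
def eqvF (P : Params) : Var → Var → Fmd3
  | .x, .y => P.dxy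
  | .y, .x => P.dxy
  | .x, .z => P.dxz
  | .z, .x => P.dxz
  | .y, .z => .ex .x (P.dxy.and P.dxz)
  | .z, .y => .ex .x (P.dxy.and P.dxz)
  | _, _ => trueF P

/- Tarski-style simulated substitution `φ⟨u,v⟩` for `φ` with free variables
among `{x,y}`. -/
def sXZ (P : Params) (φ : Fmd3) : Fmd3 := .ex .y ((eqvF P .y .z).and φ)
def sYZ (P : Params) (φ : Fmd3) : Fmd3 := .ex .x ((eqvF P .x .y).and (sXZ P φ))
def sYX (P : Params) (φ : Fmd3) : Fmd3 := .ex .z ((eqvF P .x .z).and (sYZ P φ))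
def sZX (P : Params) (φ : Fmd3) : Fmd3 := .ex .y ((eqvF P .y .z).and (sYX P φ))
def sZY (P : Params) (φ : Fmd3) : Fmd3 := .ex .x ((eqvF P .x .z).and φ)
def sXX (P : Params) (φ : Fmd3) : Fmd3 := .ex .y ((eqvF P .x .y).and φ)
def sYY (P : Params) (φ : Fmd3) : Fmd3 := .ex .x ((eqvF P .x .y).and φ)
def sZZ (P : Params) (φ : Fmd3) : Fmd3 := .ex .x ((eqvF P .x .z).and (sXX P φ))

def subst2 (P : Params) (φ : Fmd3) : Var → Var → Fmd3
  | .x, .y => φ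
  | .x, .z => sXZ P φ
  | .y, .z => sYZ P φ
  | .y, .x => sYX P φ
  | .z, .x => sZX P φ
  | .z, .y => sZY P φ
  | .x, .x => sXX P φ
  | .y, .y => sYY P φ
  | .z, .z => sZZ P φ

/-- The third variable, distinct from two given distinct variables. -/
def third : Var → Var → Var
  | .x, .y => .z
  | .y, .x => .z
  | .x, .z => .y
  | .z, .x => .y
  | .y, .z => .x
  | .z, .y => .x
  | v, _ => v

def pform (P : Params) (k : Bool) (u v : Var) : Fmd3 :=
  subst2 P (if k then P.p1 else P.p0) u v

/-- `u_i ≐ v_∅` for distinct `u`, `v`, where the binary sequence `i` is given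
in reverse order. -/
def peqDrev (P : Params) (u v : Var) : List Bool → Fmd3
  | [] => eqvF P u v
  | [k] => pform P k u v
  | k :: rest => .ex (third u v) ((peqDrev P u (third u v) rest).and (pform P k (third u v) v))

def peqD2 (P : Params) (u v : Var) (i j : List Bool) : Fmd3 :=
  match j with
  | [] => peqDrev P u v i.reverse
  | _ => .ex (third u v)
      ((peqDrev P u (third u v) i.reverse).and (peqDrev P v (third u v) j.reverse))

/-- The formula `u_i ≐ v_j` simulating `p_{i_n} ⋯ p_{i_0} u = p_{j_k} ⋯ p_{j_0} v`. -/
def peq (P : Params) (u : Var) (i : List Bool) (v : Var) (j : List Bool) : Fmd3 :=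
  if i = [] ∧ j = [] then eqvF P u v
  else if u = v then
    match u with
    | .x => .ex .y ((eqvF P .x .y).and (peqD2 P .x .y i j))
    | .y => .ex .x ((eqvF P .x .y).and (peqD2 P .x .y i j))
    | .z => .ex .x ((peqDrev P .z .x i.reverse).and (peqDrev P .z .x j.reverse))
  else peqD2 P u v i j

def conjF (P : Params) : List Fmd3 → Fmd3
  | [] => trueF P
  | [a] => a
  | a :: rest => a.and (conjF P rest)

def vars3 : List Var := [.x, .y, .z]

def seqsLen : Nat → List (List Bool)
  | 0 => [[]]
  | n + 1 => (seqsLen n).flatMap fun l => [false :: l, true :: l]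

/-- `H`: all binary sequences of length at most 3. -/
def seqH : List (List Bool) := seqsLen 0 ++ seqsLen 1 ++ seqsLen 2 ++ seqsLen 3

def seqH2 : List (List Bool) := seqsLen 0 ++ seqsLen 1 ++ seqsLen 2

/-- (A1): transitivity of `≐`. -/
def axA1 (P : Params) : List Fmd3 :=
  vars3.flatMap fun u => vars3.flatMap fun v => vars3.flatMap fun w =>
    seqH.flatMap fun i => seqH.flatMap fun j => seqH.map fun k =>
      ((peq P u i v j).and (peq P v j w k)).imp (peq P u i w k)

/-- (A2): congruence of `≐` w.r.t. the projections. -/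
def axA2 (P : Params) : List Fmd3 :=
  vars3.flatMap fun u => vars3.flatMap fun v =>
    seqH2.flatMap fun i => seqH2.flatMap fun j => [false, true].map fun k =>
      ((peq P u i v j).and (peq P u (i ++ [k]) u (i ++ [k]))).imp
        (peq P u (i ++ [k]) v (j ++ [k]))

/-- (A3): existence of pairs. -/
def axA3 (P : Params) : List Fmd3 :=
  vars3.flatMap fun u => vars3.flatMap fun v =>
    (vars3.filter fun w => decide (w ≠ u ∧ w ≠ v)).flatMap fun w =>
      seqH.flatMap fun i => seqH.map fun j =>
        ((peq P u i u i).and (peq P v j v j)).imp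
          (.ex w ((peq P w [false] u i).and (peq P w [true] v j)))

/-- (A4): `∃w (u ≐ w)`. -/
def axA4 (P : Params) : List Fmd3 :=
  vars3.flatMap fun u => vars3.map fun w => .ex w (eqvF P u w)

/-- The pairing axiom `Ax`. -/
def AxF (P : Params) : Fmd3 := conjF P (axA1 P ++ axA2 P ++ axA3 P ++ axA4 P)

/-- (A5), first half: uniqueness of pairs. -/
def axA5a (P : Params) : Fmd3 :=
  ((peq P .x [false] .y [false]).and (peq P .x [true] .y [true])).imp (eqvF P .x .y)

/-- (A5), second half: the two projections have the same domain. -/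
def axA5b (P : Params) : Fmd3 :=
  (peq P .x [false] .x [false]).iff (peq P .x [true] .x [true])

/-- The strong pairing axiom `SAx`. -/
def SAxF (P : Params) : Fmd3 := (AxF P).and ((axA5a P).and (axA5b P))

/-- `pair := ∃y p0 ∧ ∃y p1`. -/
def pairF (P : Params) : Fmd3 := (Fmd3.ex .y P.p0).and (.ex .y P.p1)

/-- `φu_i := ∃x(x ≐ u_i ∧ φ)` for `u ∈ {y,z}`. -/
def appA (P : Params) (φ : Fmd3) (u : Var) (i : List Bool) : Fmd3 :=
  .ex .x ((peq P .x [] u i).and φ)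

/-- Relation composition `φ ∘ ψ`. -/
def compF (P : Params) (φ ψ : Fmd3) : Fmd3 :=
  .ex .y ((appA P φ .y [false]).and ((appA P ψ .y [true]).and
    ((peq P .x [false] .y [false, false]).and
      ((peq P .y [false, true] .y [true, false]).and (peq P .y [true, true] .x [true])))))

/-- Converse `φ⌣`. -/
def convF (P : Params) (φ : Fmd3) : Fmd3 :=
  .ex .y ((appA P φ .y []).and ((peq P .y [false] .x [true]).and (peq P .y [true] .x [false])))

/-- Identity `Id := x_0 ≐ x_1`. -/
def IdF (P : Params) : Fmd3 := peq P .x [false] .x [true]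

/-- Complement `−φ := pair ∧ ¬φ`. -/
def negF (P : Params) (φ : Fmd3) : Fmd3 := (pairF P).and φ.not

/-- The universe `dra` of the relation algebra reduct. -/
def dra (P : Params) : Set Fmd3 :=
  {φ | ∃ ψ : Fmd3, ψ.OneFree ∧ Prf {AxF P} (φ.iff (compF P ψ (IdF P)))}

/-- The congruence `φ ≡_Ax ψ`. -/
def REqv (P : Params) (φ ψ : Fmd3) : Prop := Prf {AxF P} (φ.iff ψ)

/-- `Triplet := x_{11} ≐ x_{11}`. -/
def TripletF (P : Params) : Fmd3 := peq P .x [true, true] .x [true, true]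

/-- `φx_i := ∃y(y ≐ x_i ∧ φy)` for `φ ∈ Fmd3¹`. -/
def appX (P : Params) (φ : Fmd3) (i : List Bool) : Fmd3 :=
  .ex .y ((peq P .y [] .x i).and (appA P φ .y []))

/-- `(0) := 0`, `(1) := 10`, `(2) := 11`. -/
def dgt (i : Fin 3) : List Bool :=
  if i = 0 then [false] else if i = 1 then [true, false] else [true, true]

/-- The formula `T_i`. -/
def TiF (P : Params) (i : Fin 3) : Fmd3 :=
  (appX P (TripletF P) [false]).and ((appX P (TripletF P) [true]).and
    (conjF P (((List.finRange 3).filter fun j => decide (j ≠ i)).map fun j =>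
      peq P .x (false :: dgt j) .x (true :: dgt j))))

/-- Cylindrification `c_i φ := φ ∘ T_i`. -/
def ciF (P : Params) (i : Fin 3) (φ : Fmd3) : Fmd3 := compF P φ (TiF P i)

/-- Diagonal `d_{ij} := Triplet x_1 ∧ x_{1(i)} ≐ x_{1(j)}`. -/
def dijF (P : Params) (i j : Fin 3) : Fmd3 :=
  (appX P (TripletF P) [true]).and (peq P .x (true :: dgt i) .x (true :: dgt j))

/-- Complement in `Dca`: `−φ := Triplet x_1 ∧ ¬φ`. -/
def negC (P : Params) (φ : Fmd3) : Fmd3 := (appX P (TripletF P) [true]).and φ.not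

/-- The universe `dca` of the cylindric reduct. -/
def dca (P : Params) : Set Fmd3 :=
  {φ | ∃ ψ : Fmd3, ψ.OneFree ∧
    Prf {SAxF P} (φ.iff ((appX P ψ [true]).and (appX P (TripletF P) [true])))}

/-- The congruence `φ ≡_SAx ψ`. -/
def CEqv (P : Params) (φ ψ : Fmd3) : Prop := Prf {SAxF P} (φ.iff ψ)

/-- The formula `Δ(z,y) := z_0 ≐ y_{00} ∧ y_{01} ≐ y_{10} ∧ z_1 ≐ y_{11}`. -/
def deltaZY (P : Params) : Fmd3 :=
  (peq P .z [false] .y [false, false]).and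
    ((peq P .y [false, true] .y [true, false]).and (peq P .z [true] .y [true, true]))

/- ======================= Auxiliary development ======================= -/

section Aux

open Fmd3

variable {T : Set Fmd3}

/-! ### Tautology lemmas -/

private lemma t_refl (a : Fmd3) : Taut (a.imp a) := by
  intro v hor hnot; simp only [Fmd3.imp, hor, hnot]; cases v a <;> rfl

private lemma t_andL (a b : Fmd3) : Taut ((a.and b).imp a) := by
  intro v hor hnot; simp only [Fmd3.imp, Fmd3.and, hor, hnot]
  cases v a <;> cases v b <;> rfl

private lemma t_andR (a b : Fmd3) : Taut ((a.and b).imp b) := by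
  intro v hor hnot; simp only [Fmd3.imp, Fmd3.and, hor, hnot]
  cases v a <;> cases v b <;> rfl

private lemma t_impTrans (a b c : Fmd3) :
    Taut ((a.imp b).imp ((b.imp c).imp (a.imp c))) := by
  intro v hor hnot; simp only [Fmd3.imp, hor, hnot]
  cases v a <;> cases v b <;> cases v c <;> rfl

private lemma t_cAnd (g a b : Fmd3) :
    Taut ((g.imp a).imp ((g.imp b).imp (g.imp (a.and b)))) := by
  intro v hor hnot; simp only [Fmd3.imp, Fmd3.and, hor, hnot]
  cases v g <;> cases v a <;> cases v b <;> rfl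

private lemma t_cMP (g a b : Fmd3) :
    Taut ((g.imp (a.imp b)).imp ((g.imp a).imp (g.imp b))) := by
  intro v hor hnot; simp only [Fmd3.imp, hor, hnot]
  cases v g <;> cases v a <;> cases v b <;> rfl

private lemma t_weak (a g : Fmd3) : Taut (a.imp (g.imp a)) := by
  intro v hor hnot; simp only [Fmd3.imp, hor, hnot]
  cases v a <;> cases v g <;> rfl

private lemma t_andComm (a b : Fmd3) : Taut ((a.and b).imp (b.and a)) := by
  intro v hor hnot; simp only [Fmd3.imp, Fmd3.and, hor, hnot]
  cases v a <;> cases v b <;> rfl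

private lemma t_orMono (a b c d : Fmd3) :
    Taut ((a.imp c).imp ((b.imp d).imp ((a.or b).imp (c.or d)))) := by
  intro v hor hnot; simp only [Fmd3.imp, hor, hnot]
  cases v a <;> cases v b <;> cases v c <;> cases v d <;> rfl

private lemma t_andIntro (a b : Fmd3) : Taut (a.imp (b.imp (a.and b))) := by
  intro v hor hnot; simp only [Fmd3.imp, Fmd3.and, hor, hnot]
  cases v a <;> cases v b <;> rfl

private lemma t_contra (a b : Fmd3) : Taut ((a.imp b).imp (b.not.imp a.not)) := by
  intro v hor hnot; simp only [Fmd3.imp, hor, hnot]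
  cases v a <;> cases v b <;> rfl

private lemma t_pullGlue (a b d : Fmd3) :
    Taut ((b.imp ((a.not).or d)).imp ((a.and b).imp d)) := by
  intro v hor hnot; simp only [Fmd3.imp, Fmd3.and, hor, hnot]
  cases v a <;> cases v b <;> cases v d <;> rfl

private lemma t_n1 (g q s : Fmd3) :
    Taut (((g.and q).imp s).imp ((g.and s.not).imp q.not)) := by
  intro v hor hnot; simp only [Fmd3.imp, Fmd3.and, hor, hnot]
  cases v g <;> cases v q <;> cases v s <;> rfl

private lemma t_bwdN (g s r : Fmd3) :
    Taut (((g.and s).imp r).imp (((r.not).and g).imp (g.and s.not))) := by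
  intro v hor hnot; simp only [Fmd3.imp, Fmd3.and, hor, hnot]
  cases v g <;> cases v s <;> cases v r <;> rfl

private lemma t_C (a b r : Fmd3) :
    Taut ((a.iff r).imp ((b.iff r.not).imp (b.iff a.not))) := by
  intro v hor hnot; simp only [Fmd3.imp, Fmd3.iff, Fmd3.and, hor, hnot]
  cases v a <;> cases v b <;> cases v r <;> rfl

private lemma taut_trans {a b c : Fmd3} (h1 : Taut (a.imp b)) (h2 : Taut (b.imp c)) :
    Taut (a.imp c) := by
  intro v hor hnot
  have g1 := h1 v hor hnot; have g2 := h2 v hor hnot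
  simp only [Fmd3.imp, hor, hnot] at *
  revert g1 g2; cases v a <;> cases v b <;> cases v c <;> simp

/-! ### Derived rules -/

private lemma impTrans {a b c : Fmd3} (h1 : Prf T (a.imp b)) (h2 : Prf T (b.imp c)) :
    Prf T (a.imp c) :=
  Prf.mp (Prf.mp (Prf.taut (t_impTrans a b c)) h1) h2

private lemma mono_ex (v : Var) {a b : Fmd3} (h : Prf T (a.imp b)) :
    Prf T ((Fmd3.ex v a).imp (.ex v b)) :=
  Prf.mp (Prf.ax2 v a b) (Prf.gen v h)

private lemma cAnd {g a b : Fmd3} (h1 : Prf T (g.imp a)) (h2 : Prf T (g.imp b)) :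
    Prf T (g.imp (a.and b)) :=
  Prf.mp (Prf.mp (Prf.taut (t_cAnd g a b)) h1) h2

private lemma cMP {g a b : Fmd3} (h1 : Prf T (g.imp (a.imp b))) (h2 : Prf T (g.imp a)) :
    Prf T (g.imp b) :=
  Prf.mp (Prf.mp (Prf.taut (t_cMP g a b)) h1) h2

private lemma cOfPrf {a : Fmd3} (g : Fmd3) (h : Prf T a) : Prf T (g.imp a) :=
  Prf.mp (Prf.taut (t_weak a g)) h

private lemma iffIntro {a b : Fmd3} (h1 : Prf T (a.imp b)) (h2 : Prf T (b.imp a)) :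
    Prf T (a.iff b) :=
  Prf.mp (Prf.mp (Prf.taut (t_andIntro (a.imp b) (b.imp a))) h1) h2

private lemma contraPrf {a b : Fmd3} (h : Prf T (a.imp b)) : Prf T (b.not.imp a.not) :=
  Prf.mp (Prf.taut (t_contra a b)) h

/-- If `v` is not free in `φ` then `⊢ ∃v φ → φ`. -/
private lemma exFree (v : Var) : ∀ {φ : Fmd3}, v ∉ φ.freeVars →
    Prf T ((Fmd3.ex v φ).imp φ)
  | .P, h => by
    exfalso; apply h; cases v <;> simp [Fmd3.freeVars]
  | .or a b, h => by
    have ha : v ∉ a.freeVars := fun hv => h (by simp [Fmd3.freeVars, hv])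
    have hb : v ∉ b.freeVars := fun hv => h (by simp [Fmd3.freeVars, hv])
    have h5 : Prf T ((Fmd3.ex v (a.or b)).imp ((Fmd3.ex v a).or (.ex v b))) :=
      Prf.mp (Prf.taut (t_andL _ _)) (Prf.ax5 v a b)
    have hm : Prf T (((Fmd3.ex v a).or (.ex v b)).imp (a.or b)) :=
      Prf.mp (Prf.mp (Prf.taut (t_orMono _ _ _ _)) (exFree v ha)) (exFree v hb)
    exact impTrans h5 hm
  | .not a, h => by
    have ha : v ∉ a.freeVars := h
    have m : Prf T ((a.not).imp ((Fmd3.ex v a).not)) := contraPrf (exFree v ha)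
    have s1 : Prf T ((Fmd3.ex v a.not).imp (.ex v ((Fmd3.ex v a).not))) := mono_ex v m
    have s2 : Prf T ((Fmd3.ex v ((Fmd3.ex v a).not)).imp ((Fmd3.ex v a).not)) :=
      Prf.ax6 v a
    have s3 : Prf T (((Fmd3.ex v a).not).imp a.not) := contraPrf (Prf.ax3 v a)
    exact impTrans s1 (impTrans s2 s3)
  | .ex w a, h => by
    by_cases hvw : v = w
    · subst hvw; exact Prf.ax4 v a
    · have ha : v ∉ a.freeVars := by
        intro hv; exact h (by simp [Fmd3.freeVars, Finset.mem_erase, hvw, hv])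
      exact impTrans (Prf.ax7 v w a) (mono_ex w (exFree v ha))

/-- If `v` is not free in `a` then `⊢ (a ∧ ∃v b) → ∃v (a ∧ b)`. -/
private lemma pull_in (v : Var) (a b : Fmd3) (h : v ∉ a.freeVars) :
    Prf T ((a.and (Fmd3.ex v b)).imp (.ex v (a.and b))) := by
  have t : Prf T (b.imp ((a.not).or (a.and b))) := by
    apply Prf.taut
    intro v' hor hnot; simp only [Fmd3.imp, Fmd3.and, hor, hnot]
    cases v' a <;> cases v' b <;> rfl
  have s1 : Prf T ((Fmd3.ex v b).imp (.ex v ((a.not).or (a.and b)))) := mono_ex v t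
  have s2 : Prf T ((Fmd3.ex v ((a.not).or (a.and b))).imp
      ((Fmd3.ex v a.not).or (.ex v (a.and b)))) :=
    Prf.mp (Prf.taut (t_andL _ _)) (Prf.ax5 v _ _)
  have s3 : Prf T ((Fmd3.ex v a.not).imp a.not) := exFree v (by simpa [Fmd3.freeVars] using h)
  have s4 : Prf T (((Fmd3.ex v a.not).or (.ex v (a.and b))).imp
      ((a.not).or (.ex v (a.and b)))) :=
    Prf.mp (Prf.mp (Prf.taut (t_orMono _ _ _ _)) s3) (Prf.taut (t_refl _))
  have s5 : Prf T ((Fmd3.ex v b).imp ((a.not).or (.ex v (a.and b)))) :=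
    impTrans s1 (impTrans s2 s4)
  exact Prf.mp (Prf.taut (t_pullGlue a (Fmd3.ex v b) (Fmd3.ex v (a.and b)))) s5

end Aux

section Aux2

open Fmd3

variable {T : Set Fmd3} {P : Params}

private lemma taut_conj_mem (P : Params) :
    ∀ (l : List Fmd3) (a : Fmd3), a ∈ l → Taut ((conjF P l).imp a)
  | [], a, h => absurd h List.not_mem_nil
  | [b], a, h => by
    simp only [List.mem_singleton] at h; subst h
    simpa [conjF] using t_refl a
  | b :: c :: l, a, h => by
    have hconj : conjF P (b :: c :: l) = b.and (conjF P (c :: l)) := rfl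
    rw [hconj]
    rcases List.mem_cons.mp h with h1 | h2
    · subst h1; exact t_andL _ _
    · exact taut_trans (t_andR _ _) (taut_conj_mem P (c :: l) a h2)

private lemma prfAx {c : Fmd3}
    (h : c ∈ axA1 P ++ axA2 P ++ axA3 P ++ axA4 P) : Prf {AxF P} c :=
  Prf.mp (Prf.taut (taut_conj_mem P _ c h)) (Prf.hyp rfl)

private lemma mem_vars3 (u : Var) : u ∈ vars3 := by cases u <;> simp [vars3]

private lemma prf_A1 (u v w : Var) (i j k : List Bool)
    (hi : i ∈ seqH) (hj : j ∈ seqH) (hk : k ∈ seqH) :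
    Prf {AxF P} (((peq P u i v j).and (peq P v j w k)).imp (peq P u i w k)) := by
  apply prfAx
  apply List.mem_append_left; apply List.mem_append_left; apply List.mem_append_left
  simp only [axA1, List.mem_flatMap, List.mem_map]
  exact ⟨u, mem_vars3 u, v, mem_vars3 v, w, mem_vars3 w, i, hi, j, hj, k, hk, rfl⟩

private lemma prf_A2 (u v : Var) (i j : List Bool) (k : Bool)
    (hi : i ∈ seqH2) (hj : j ∈ seqH2) :
    Prf {AxF P} (((peq P u i v j).and (peq P u (i ++ [k]) u (i ++ [k]))).imp
      (peq P u (i ++ [k]) v (j ++ [k]))) := by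
  apply prfAx
  apply List.mem_append_left; apply List.mem_append_left; apply List.mem_append_right
  simp only [axA2, List.mem_flatMap, List.mem_map]
  exact ⟨u, mem_vars3 u, v, mem_vars3 v, i, hi, j, hj, k, by cases k <;> simp, rfl⟩

private lemma prf_A4 (u w : Var) :
    Prf {AxF P} (Fmd3.ex w (eqvF P u w)) := by
  apply prfAx
  apply List.mem_append_right
  simp only [axA4, List.mem_flatMap, List.mem_map]
  exact ⟨u, mem_vars3 u, w, mem_vars3 w, rfl⟩

/-! ### Symmetry of simulated equality -/

private lemma third_comm : ∀ u v : Var, third v u = third u v := by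
  intro u v; cases u <;> cases v <;> rfl

private lemma peqD2_cons (u v : Var) (i : List Bool) (b : Bool) (j : List Bool) :
    peqD2 P u v i (b :: j) = .ex (third u v)
      ((peqDrev P u (third u v) i.reverse).and (peqDrev P v (third u v) (b :: j).reverse)) :=
  rfl

private lemma peq_swap (u v : Var) (i j : List Bool)
    (huv : u ≠ v) (hi : i ≠ []) (hj : j ≠ []) :
    Prf T ((peq P u i v j).imp (peq P v j u i)) := by
  cases i with
  | nil => exact absurd rfl hi
  | cons a i =>
  cases j with
  | nil => exact absurd rfl hj
  | cons b j =>
  have e1 : peq P u (a :: i) v (b :: j) =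
      .ex (third u v) ((peqDrev P u (third u v) (a :: i).reverse).and
        (peqDrev P v (third u v) (b :: j).reverse)) := by
    rw [peq.eq_def, if_neg (by simp), if_neg huv, peqD2_cons]
  have e2 : peq P v (b :: j) u (a :: i) =
      .ex (third u v) ((peqDrev P v (third u v) (b :: j).reverse).and
        (peqDrev P u (third u v) (a :: i).reverse)) := by
    rw [peq.eq_def, if_neg (by simp), if_neg (Ne.symm huv), peqD2_cons, third_comm]
  rw [e1, e2]
  exact mono_ex _ (Prf.taut (t_andComm _ _))

end Aux2

section Aux3

open Fmd3

variable {P : Params}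

private lemma fv_and (a b : Fmd3) : (a.and b).freeVars = a.freeVars ∪ b.freeVars := by
  simp [Fmd3.and, Fmd3.freeVars]

private lemma fv_ex_and {a b : Fmd3} {sa sb : Finset Var} (w : Var)
    (ha : a.freeVars ⊆ sa) (hb : b.freeVars ⊆ sb) :
    (Fmd3.ex w (a.and b)).freeVars ⊆ (sa ∪ sb).erase w := by
  intro v hv
  simp only [Fmd3.freeVars, fv_and, Finset.mem_erase, Finset.mem_union] at hv ⊢
  exact ⟨hv.1, hv.2.elim (fun h => Or.inl (ha h)) (fun h => Or.inr (hb h))⟩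

private lemma fv_eqv (h : GoodParams P) (u v : Var) (huv : u ≠ v) :
    (eqvF P u v).freeVars ⊆ {u, v} := by
  obtain ⟨h1, h2, _, _⟩ := h
  cases u <;> cases v <;>
    first
      | exact absurd rfl huv
      | (simp only [eqvF, Fmd3.freeVars, fv_and, h1, h2]; decide)

private lemma fv_sXZ (h : GoodParams P) {q : Fmd3} (hq : q.freeVars ⊆ {Var.x, Var.y}) :
    (sXZ P q).freeVars ⊆ {Var.x, Var.z} :=
  (fv_ex_and _ (fv_eqv h .y .z (by decide)) hq).trans (by decide)

private lemma fv_sYZ (h : GoodParams P) {q : Fmd3} (hq : q.freeVars ⊆ {Var.x, Var.y}) :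
    (sYZ P q).freeVars ⊆ {Var.y, Var.z} :=
  (fv_ex_and _ (fv_eqv h .x .y (by decide)) (fv_sXZ h hq)).trans (by decide)

private lemma fv_sYX (h : GoodParams P) {q : Fmd3} (hq : q.freeVars ⊆ {Var.x, Var.y}) :
    (sYX P q).freeVars ⊆ {Var.x, Var.y} :=
  (fv_ex_and _ (fv_eqv h .x .z (by decide)) (fv_sYZ h hq)).trans (by decide)

private lemma fv_sZX (h : GoodParams P) {q : Fmd3} (hq : q.freeVars ⊆ {Var.x, Var.y}) :
    (sZX P q).freeVars ⊆ {Var.x, Var.z} :=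
  (fv_ex_and _ (fv_eqv h .y .z (by decide)) (fv_sYX h hq)).trans (by decide)

private lemma fv_sZY (h : GoodParams P) {q : Fmd3} (hq : q.freeVars ⊆ {Var.x, Var.y}) :
    (sZY P q).freeVars ⊆ {Var.y, Var.z} :=
  (fv_ex_and _ (fv_eqv h .x .z (by decide)) hq).trans (by decide)

private lemma fv_pform (h : GoodParams P) (k : Bool) (u v : Var) (huv : u ≠ v) :
    (pform P k u v).freeVars ⊆ {u, v} := by
  have hq : (if k then P.p1 else P.p0).freeVars ⊆ {Var.x, Var.y} := by
    obtain ⟨_, _, h3, h4⟩ := h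
    cases k <;> simp [h3, h4]
  cases u <;> cases v <;> first
    | exact absurd rfl huv
    | exact hq
    | exact (fv_sXZ h hq).trans (by decide)
    | exact (fv_sYZ h hq).trans (by decide)
    | exact (fv_sYX h hq).trans (by decide)
    | exact (fv_sZX h hq).trans (by decide)
    | exact (fv_sZY h hq).trans (by decide)

private lemma third_ne : ∀ u v : Var, u ≠ v → third u v ≠ u ∧ third u v ≠ v := by
  intro u v huv; cases u <;> cases v <;> simp_all [third]

private lemma fv_peqDrev (h : GoodParams P) :
    ∀ (l : List Bool) (u v : Var), u ≠ v → (peqDrev P u v l).freeVars ⊆ {u, v}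
  | [], u, v, huv => fv_eqv h u v huv
  | [k], u, v, huv => fv_pform h k u v huv
  | k :: k' :: l, u, v, huv => by
    have hw := third_ne u v huv
    have e : peqDrev P u v (k :: k' :: l) = .ex (third u v)
        ((peqDrev P u (third u v) (k' :: l)).and (pform P k (third u v) v)) := rfl
    rw [e]
    refine (fv_ex_and _ (fv_peqDrev h (k' :: l) u (third u v) (Ne.symm hw.1))
      (fv_pform h k (third u v) v hw.2)).trans ?_
    intro x hx
    simp only [Finset.mem_erase, Finset.mem_union, Finset.mem_insert,
      Finset.mem_singleton] at hx ⊢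
    tauto

private lemma fv_peqD2 (h : GoodParams P) (u v : Var) (huv : u ≠ v) (i j : List Bool) :
    (peqD2 P u v i j).freeVars ⊆ {u, v} := by
  cases j with
  | nil => exact fv_peqDrev h i.reverse u v huv
  | cons b j =>
    rw [peqD2_cons]
    have hw := third_ne u v huv
    refine (fv_ex_and _ (fv_peqDrev h _ u _ (Ne.symm hw.1))
      (fv_peqDrev h _ v _ (Ne.symm hw.2))).trans ?_
    intro x hx
    simp only [Finset.mem_erase, Finset.mem_union, Finset.mem_insert,
      Finset.mem_singleton] at hx ⊢
    tauto

private lemma fv_peq (h : GoodParams P) (u v : Var) (huv : u ≠ v) (i j : List Bool) :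
    (peq P u i v j).freeVars ⊆ {u, v} := by
  by_cases hij : i = [] ∧ j = []
  · rw [peq.eq_def, if_pos hij]
    exact fv_eqv h u v huv
  · rw [peq.eq_def, if_neg hij, if_neg huv]
    exact fv_peqD2 h u v huv i j

private lemma fv_peq_yy (h : GoodParams P) (i j : List Bool) (hne : ¬(i = [] ∧ j = [])) :
    (peq P .y i .y j).freeVars ⊆ {Var.y} := by
  have e : peq P .y i .y j = .ex .x ((eqvF P .x .y).and (peqD2 P .x .y i j)) := by
    rw [peq.eq_def, if_neg hne]; rfl
  rw [e]
  exact (fv_ex_and _ (fv_eqv h .x .y (by decide))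
    (fv_peqD2 h .x .y (by decide) i j)).trans (by decide)

end Aux3

/-- **Theorem ((C2), (C1) and (C)).** For all `φ, ψ ∈ Fmd3¹`:
`Ax ⊢d3 (φ∘ψ)z ↔ ∃y(Δ(z,y) ∧ φy_0 ∧ ψy_1)`,
`Ax ⊢d3 [¬(φ∘ψ)]z ↔ ¬∃y(Δ(z,y) ∧ φy_0 ∧ ψy_1)`, and consequently
`Ax ⊢d3 [¬(φ∘ψ)]z ↔ ¬[(φ∘ψ)z]`. -/
theorem comp_commutes_with_appZ (P : Params) (hP : GoodParams P)
    (φ ψ : Fmd3) (hφ : φ.OneFree) (hψ : ψ.OneFree) :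
    Prf {AxF P} ((appA P (compF P φ ψ) .z []).iff
      (.ex .y ((deltaZY P).and ((appA P φ .y [false]).and (appA P ψ .y [true]))))) ∧
    Prf {AxF P} ((appA P (compF P φ ψ).not .z []).iff
      (Fmd3.ex .y ((deltaZY P).and ((appA P φ .y [false]).and (appA P ψ .y [true])))).not) ∧
    Prf {AxF P} ((appA P (compF P φ ψ).not .z []).iff (appA P (compF P φ ψ) .z []).not) := by
  -- Local abbreviations
  let G : Fmd3 := eqvF P .x .z
  let A : Fmd3 := appA P φ .y [false]
  let B : Fmd3 := appA P ψ .y [true]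
  let C : Fmd3 := peq P .x [false] .y [false, false]
  let D : Fmd3 := peq P .y [false, true] .y [true, false]
  let E : Fmd3 := peq P .y [true, true] .x [true]
  let C' : Fmd3 := peq P .z [false] .y [false, false]
  let E' : Fmd3 := peq P .z [true] .y [true, true]
  let H : Fmd3 := A.and (B.and (C.and (D.and E)))
  let K : Fmd3 := (deltaZY P).and (A.and B)
  let Cs : Fmd3 := peq P .y [false, false] .x [false]
  let Cxx : Fmd3 := peq P .x [false] .x [false]
  let Cxz : Fmd3 := peq P .x [false] .z [false]
  let Czx : Fmd3 := peq P .z [false] .x [false]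
  let Es : Fmd3 := peq P .x [true] .y [true, true]
  let Exx : Fmd3 := peq P .x [true] .x [true]
  let Exz : Fmd3 := peq P .x [true] .z [true]
  let Ezx : Fmd3 := peq P .z [true] .x [true]
  let C's : Fmd3 := peq P .y [false, false] .z [false]
  let Czz : Fmd3 := peq P .z [false] .z [false]
  let E's : Fmd3 := peq P .y [true, true] .z [true]
  let Ezz : Fmd3 := peq P .z [true] .z [true]
  -- Free-variable facts
  have fvA : A.freeVars ⊆ {Var.y} := by
    show (Fmd3.ex .x ((peq P .x [] .y [false]).and φ)).freeVars ⊆ {Var.y}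
    exact (fv_ex_and .x (fv_peq hP .x .y (by decide) [] [false]) hφ).trans (by decide)
  have fvB : B.freeVars ⊆ {Var.y} := by
    show (Fmd3.ex .x ((peq P .x [] .y [true]).and ψ)).freeVars ⊆ {Var.y}
    exact (fv_ex_and .x (fv_peq hP .x .y (by decide) [] [true]) hψ).trans (by decide)
  have fvC : C.freeVars ⊆ {Var.x, Var.y} := fv_peq hP .x .y (by decide) _ _
  have fvD : D.freeVars ⊆ {Var.y} := fv_peq_yy hP _ _ (by decide)
  have fvE : E.freeVars ⊆ {Var.y, Var.x} := fv_peq hP .y .x (by decide) _ _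
  have fvC' : C'.freeVars ⊆ {Var.z, Var.y} := fv_peq hP .z .y (by decide) _ _
  have fvE' : E'.freeVars ⊆ {Var.z, Var.y} := fv_peq hP .z .y (by decide) _ _
  have fvG : G.freeVars = {Var.x, Var.z} := hP.2.1
  have hyG : Var.y ∉ G.freeVars := by rw [fvG]; decide
  have fvH : H.freeVars ⊆ {Var.x, Var.y} := by
    show ((A.and (B.and (C.and (D.and E)))).freeVars : Finset Var) ⊆ _
    simp only [fv_and]
    refine Finset.union_subset (fvA.trans (by decide)) (Finset.union_subset
      (fvB.trans (by decide)) (Finset.union_subset fvC (Finset.union_subset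
        (fvD.trans (by decide)) (fvE.trans (by decide)))))
  have fvK : K.freeVars ⊆ {Var.y, Var.z} := by
    show (((deltaZY P).and (A.and B)).freeVars : Finset Var) ⊆ _
    simp only [deltaZY, fv_and]
    refine Finset.union_subset (Finset.union_subset (fvC'.trans (by decide))
      (Finset.union_subset (fvD.trans (by decide)) (fvE'.trans (by decide))))
      (Finset.union_subset (fvA.trans (by decide)) (fvB.trans (by decide)))
  have hxK : Var.x ∉ K.freeVars := fun hx => absurd (fvK hx) (by decide)
  have hxRHS : Var.x ∉ (Fmd3.ex .y K).freeVars := by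
    intro hx
    have h1 : Var.x ∈ K.freeVars.erase Var.y := hx
    exact absurd (fvK (Finset.mem_of_mem_erase h1)) (by decide)
  have fvLHSy : Var.y ∉ (Fmd3.ex .x (G.and (Fmd3.ex .y H))).freeVars := by
    intro hy
    have h1 : Var.y ∈ (G.freeVars ∪ H.freeVars.erase Var.y).erase Var.x := by
      simpa only [Fmd3.freeVars, fv_and] using hy
    rcases Finset.mem_union.mp (Finset.mem_erase.mp h1).2 with h | h
    · rw [fvG] at h; exact absurd h (by decide)
    · exact (Finset.notMem_erase _ _) h
  -- Axiom instances
  have exG : Prf {AxF P} (Fmd3.ex .x G) := prf_A4 .z .x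
  have i1 : Prf {AxF P} ((C.and Cs).imp Cxx) :=
    prf_A1 .x .y .x [false] [false, false] [false] (by decide) (by decide) (by decide)
  have i2 : Prf {AxF P} ((Czx.and C).imp C') :=
    prf_A1 .z .x .y [false] [false] [false, false] (by decide) (by decide) (by decide)
  have i3 : Prf {AxF P} ((Es.and E).imp Exx) :=
    prf_A1 .x .y .x [true] [true, true] [true] (by decide) (by decide) (by decide)
  have i4 : Prf {AxF P} ((Ezx.and Es).imp E') :=
    prf_A1 .z .x .y [true] [true] [true, true] (by decide) (by decide) (by decide)
  have i5 : Prf {AxF P} ((C'.and C's).imp Czz) :=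
    prf_A1 .z .y .z [false] [false, false] [false] (by decide) (by decide) (by decide)
  have i6 : Prf {AxF P} ((Cxz.and C').imp C) :=
    prf_A1 .x .z .y [false] [false] [false, false] (by decide) (by decide) (by decide)
  have i7 : Prf {AxF P} ((E'.and E's).imp Ezz) :=
    prf_A1 .z .y .z [true] [true, true] [true] (by decide) (by decide) (by decide)
  have i8 : Prf {AxF P} ((E's.and Ezx).imp E) :=
    prf_A1 .y .z .x [true, true] [true] [true] (by decide) (by decide) (by decide)
  have j1 : Prf {AxF P} ((G.and Cxx).imp Cxz) :=
    prf_A2 .x .z [] [] false (by decide) (by decide)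
  have j2 : Prf {AxF P} ((G.and Exx).imp Exz) :=
    prf_A2 .x .z [] [] true (by decide) (by decide)
  have j3 : Prf {AxF P} ((G.and Czz).imp Czx) :=
    prf_A2 .z .x [] [] false (by decide) (by decide)
  have j4 : Prf {AxF P} ((G.and Ezz).imp Ezx) :=
    prf_A2 .z .x [] [] true (by decide) (by decide)
  -- Symmetry instances
  have swC : Prf {AxF P} (C.imp Cs) :=
    peq_swap .x .y [false] [false, false] (by decide) (by decide) (by decide)
  have swCxz : Prf {AxF P} (Cxz.imp Czx) :=
    peq_swap .x .z [false] [false] (by decide) (by decide) (by decide)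
  have swCzx : Prf {AxF P} (Czx.imp Cxz) :=
    peq_swap .z .x [false] [false] (by decide) (by decide) (by decide)
  have swE : Prf {AxF P} (E.imp Es) :=
    peq_swap .y .x [true, true] [true] (by decide) (by decide) (by decide)
  have swExz : Prf {AxF P} (Exz.imp Ezx) :=
    peq_swap .x .z [true] [true] (by decide) (by decide) (by decide)
  have swC' : Prf {AxF P} (C'.imp C's) :=
    peq_swap .z .y [false] [false, false] (by decide) (by decide) (by decide)
  have swE' : Prf {AxF P} (E'.imp E's) :=
    peq_swap .z .y [true] [true, true] (by decide) (by decide) (by decide)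
  -- L1 : (G ∧ H) → K
  have pG : Prf {AxF P} ((G.and H).imp G) := Prf.taut (t_andL G H)
  have pH : Prf {AxF P} ((G.and H).imp H) := Prf.taut (t_andR G H)
  have pA : Prf {AxF P} ((G.and H).imp A) := impTrans pH (Prf.taut (t_andL _ _))
  have p1 : Prf {AxF P} ((G.and H).imp (B.and (C.and (D.and E)))) :=
    impTrans pH (Prf.taut (t_andR _ _))
  have pB : Prf {AxF P} ((G.and H).imp B) := impTrans p1 (Prf.taut (t_andL _ _))
  have p2 : Prf {AxF P} ((G.and H).imp (C.and (D.and E))) :=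
    impTrans p1 (Prf.taut (t_andR _ _))
  have pC : Prf {AxF P} ((G.and H).imp C) := impTrans p2 (Prf.taut (t_andL _ _))
  have p3 : Prf {AxF P} ((G.and H).imp (D.and E)) := impTrans p2 (Prf.taut (t_andR _ _))
  have pD : Prf {AxF P} ((G.and H).imp D) := impTrans p3 (Prf.taut (t_andL _ _))
  have pE : Prf {AxF P} ((G.and H).imp E) := impTrans p3 (Prf.taut (t_andR _ _))
  have cCs : Prf {AxF P} ((G.and H).imp Cs) := cMP (cOfPrf (G.and H) swC) pC
  have cCxx : Prf {AxF P} ((G.and H).imp Cxx) := cMP (cOfPrf (G.and H) i1) (cAnd pC cCs)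
  have cCxz : Prf {AxF P} ((G.and H).imp Cxz) := cMP (cOfPrf (G.and H) j1) (cAnd pG cCxx)
  have cCzx : Prf {AxF P} ((G.and H).imp Czx) := cMP (cOfPrf (G.and H) swCxz) cCxz
  have cC' : Prf {AxF P} ((G.and H).imp C') := cMP (cOfPrf (G.and H) i2) (cAnd cCzx pC)
  have cEs : Prf {AxF P} ((G.and H).imp Es) := cMP (cOfPrf (G.and H) swE) pE
  have cExx : Prf {AxF P} ((G.and H).imp Exx) := cMP (cOfPrf (G.and H) i3) (cAnd cEs pE)
  have cExz : Prf {AxF P} ((G.and H).imp Exz) := cMP (cOfPrf (G.and H) j2) (cAnd pG cExx)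
  have cEzx : Prf {AxF P} ((G.and H).imp Ezx) := cMP (cOfPrf (G.and H) swExz) cExz
  have cE' : Prf {AxF P} ((G.and H).imp E') := cMP (cOfPrf (G.and H) i4) (cAnd cEzx cEs)
  have L1 : Prf {AxF P} ((G.and H).imp K) :=
    cAnd (cAnd cC' (cAnd pD cE')) (cAnd pA pB)
  -- L2 : (G ∧ K) → H
  have qG : Prf {AxF P} ((G.and K).imp G) := Prf.taut (t_andL G K)
  have qK : Prf {AxF P} ((G.and K).imp K) := Prf.taut (t_andR G K)
  have qDel : Prf {AxF P} ((G.and K).imp (deltaZY P)) := impTrans qK (Prf.taut (t_andL _ _))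
  have qAB : Prf {AxF P} ((G.and K).imp (A.and B)) := impTrans qK (Prf.taut (t_andR _ _))
  have qA : Prf {AxF P} ((G.and K).imp A) := impTrans qAB (Prf.taut (t_andL _ _))
  have qB : Prf {AxF P} ((G.and K).imp B) := impTrans qAB (Prf.taut (t_andR _ _))
  have qC' : Prf {AxF P} ((G.and K).imp C') := impTrans qDel (Prf.taut (t_andL C' (D.and E')))
  have q5 : Prf {AxF P} ((G.and K).imp (D.and E')) :=
    impTrans qDel (Prf.taut (t_andR C' (D.and E')))
  have qD : Prf {AxF P} ((G.and K).imp D) := impTrans q5 (Prf.taut (t_andL _ _))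
  have qE' : Prf {AxF P} ((G.and K).imp E') := impTrans q5 (Prf.taut (t_andR _ _))
  have qC's : Prf {AxF P} ((G.and K).imp C's) := cMP (cOfPrf (G.and K) swC') qC'
  have qCzz : Prf {AxF P} ((G.and K).imp Czz) := cMP (cOfPrf (G.and K) i5) (cAnd qC' qC's)
  have qCzx : Prf {AxF P} ((G.and K).imp Czx) := cMP (cOfPrf (G.and K) j3) (cAnd qG qCzz)
  have qCxz : Prf {AxF P} ((G.and K).imp Cxz) := cMP (cOfPrf (G.and K) swCzx) qCzx
  have qC : Prf {AxF P} ((G.and K).imp C) := cMP (cOfPrf (G.and K) i6) (cAnd qCxz qC')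
  have qE's : Prf {AxF P} ((G.and K).imp E's) := cMP (cOfPrf (G.and K) swE') qE'
  have qEzz : Prf {AxF P} ((G.and K).imp Ezz) := cMP (cOfPrf (G.and K) i7) (cAnd qE' qE's)
  have qEzx : Prf {AxF P} ((G.and K).imp Ezx) := cMP (cOfPrf (G.and K) j4) (cAnd qG qEzz)
  have qE : Prf {AxF P} ((G.and K).imp E) := cMP (cOfPrf (G.and K) i8) (cAnd qE's qEzx)
  have L2 : Prf {AxF P} ((G.and K).imp H) := cAnd qA (cAnd qB (cAnd qC (cAnd qD qE)))
  -- C2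
  have fwd : Prf {AxF P} ((Fmd3.ex .x (G.and (Fmd3.ex .y H))).imp (Fmd3.ex .y K)) :=
    impTrans (mono_ex .x (pull_in .y G H hyG))
      (impTrans (Prf.ax7 .x .y (G.and H))
        (mono_ex .y (impTrans (mono_ex .x L1) (exFree .x hxK))))
  have b1 : Prf {AxF P} (K.imp (K.and (Fmd3.ex .x G))) :=
    cAnd (Prf.taut (t_refl K)) (cOfPrf K exG)
  have b3 : Prf {AxF P} ((K.and G).imp (G.and (Fmd3.ex .y H))) :=
    cAnd (Prf.taut (t_andR K G))
      (impTrans (impTrans (Prf.taut (t_andComm K G)) L2) (Prf.ax3 .y H))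
  have bwd : Prf {AxF P} ((Fmd3.ex .y K).imp (Fmd3.ex .x (G.and (Fmd3.ex .y H)))) :=
    impTrans (mono_ex .y (impTrans b1 (impTrans (pull_in .x K G hxK) (mono_ex .x b3))))
      (exFree .y fvLHSy)
  have c2 : Prf {AxF P} ((Fmd3.ex .x (G.and (Fmd3.ex .y H))).iff (Fmd3.ex .y K)) :=
    iffIntro fwd bwd
  -- C1
  have pS : Prf {AxF P} ((G.and (Fmd3.ex .y K)).imp (Fmd3.ex .y H)) :=
    impTrans (pull_in .y G K hyG) (mono_ex .y L2)
  have n1 : Prf {AxF P} ((G.and (Fmd3.ex .y H).not).imp (Fmd3.ex .y K).not) :=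
    Prf.mp (Prf.taut (t_n1 G (Fmd3.ex .y K) (Fmd3.ex .y H))) pS
  have hxRHSnot : Var.x ∉ ((Fmd3.ex .y K).not).freeVars := hxRHS
  have fwdN : Prf {AxF P} ((Fmd3.ex .x (G.and (Fmd3.ex .y H).not)).imp (Fmd3.ex .y K).not) :=
    impTrans (mono_ex .x n1) (exFree .x hxRHSnot)
  have pR : Prf {AxF P} ((G.and (Fmd3.ex .y H)).imp (Fmd3.ex .y K)) :=
    impTrans (pull_in .y G H hyG) (mono_ex .y L1)
  have m : Prf {AxF P} ((((Fmd3.ex .y K).not).and G).imp (G.and (Fmd3.ex .y H).not)) :=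
    Prf.mp (Prf.taut (t_bwdN G (Fmd3.ex .y H) (Fmd3.ex .y K))) pR
  have bwdN : Prf {AxF P}
      (((Fmd3.ex .y K).not).imp (Fmd3.ex .x (G.and (Fmd3.ex .y H).not))) :=
    impTrans (cAnd (Prf.taut (t_refl ((Fmd3.ex .y K).not))) (cOfPrf ((Fmd3.ex .y K).not) exG))
      (impTrans (pull_in .x ((Fmd3.ex .y K).not) G hxRHSnot) (mono_ex .x m))
  have c1 : Prf {AxF P} ((Fmd3.ex .x (G.and (Fmd3.ex .y H).not)).iff (Fmd3.ex .y K).not) :=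
    iffIntro fwdN bwdN
  have c0 : Prf {AxF P} ((Fmd3.ex .x (G.and (Fmd3.ex .y H).not)).iff
      (Fmd3.ex .x (G.and (Fmd3.ex .y H))).not) :=
    Prf.mp (Prf.mp (Prf.taut (t_C (Fmd3.ex .x (G.and (Fmd3.ex .y H)))
      (Fmd3.ex .x (G.and (Fmd3.ex .y H).not)) (Fmd3.ex .y K))) c2) c1
  exact ⟨c2, c1, c0⟩
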